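/- Let T : ℓ₂ → ℓ₂ be T(x₁,x₂,…) = (1,x₁,x₂,…) and let z ∈ ℓ₂ with ‖z‖₂ ≤ 1 define the linear functional h(x) = ⟨x, z⟩. If z ≠ 0 then h is not subinvariant for T; i.e., there exists x ∈ ℓ₂ with ⟨x − Tx, z⟩ < 0. -/

import Mathlib

open scoped ENNReal RealInnerProductSpace

/-- For the shift `T(x₁,x₂,…) = (1,x₁,x₂,…)` on `ℓ₂` and `z ∈ ℓ₂` with `‖z‖ ≤ 1`, `z ≠ 0`,
the linear functional `h x = ⟨x,z⟩` is not subinvariant for `T`: there is `x` with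
`⟨x − Tx, z⟩ < 0`. -/
theorem stmt_9 (T : lp (fun _ : ℕ => ℝ) 2 → lp (fun _ : ℕ => ℝ) 2)
    (hT : ∀ x : lp (fun _ : ℕ => ℝ) 2,
      (T x) 0 = 1 ∧ ∀ n : ℕ, (T x) (n + 1) = x n)
    (z : lp (fun _ : ℕ => ℝ) 2) (hz : ‖z‖ ≤ 1) (hz0 : z ≠ 0) :
    ∃ x : lp (fun _ : ℕ => ℝ) 2, ⟪x - T x, z⟫ < 0 := by
  set w : lp (fun _ : ℕ => ℝ) 2 := T z - T 0 with hwdef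
  have hw0 : w 0 = 0 := by
    simp [hwdef, lp.coeFn_sub, (hT z).1, (hT 0).1]
  have hwn : ∀ n, w (n + 1) = z n := by
    intro n
    simp [hwdef, lp.coeFn_sub, (hT z).2 n, (hT 0).2 n]
  -- inner product as tsum for real lp
  have hinner : ∀ f g : lp (fun _ : ℕ => ℝ) 2, ⟪f, g⟫ = ∑' i, f i * g i := by
    intro f g; rw [lp.inner_eq_tsum]; simp only [Real.inner_apply]
  -- ⟪T 0, z⟫ = z 0
  have hT0z : ⟪T 0, z⟫ = z 0 := by
    rw [hinner]
    rw [tsum_eq_single 0]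
    · rw [(hT 0).1]; ring
    · intro n hn
      obtain ⟨m, rfl⟩ := Nat.exists_eq_succ_of_ne_zero hn
      rw [(hT 0).2 m]
      simp
  -- ‖w‖ = ‖z‖
  have hsumw : Summable (fun n => w n * w n) := by
    exact lp.summable_inner (𝕜 := ℝ) w w
  have hww : ⟪w, w⟫ = ⟪z, z⟫ := by
    rw [hinner, hinner, Summable.tsum_eq_zero_add hsumw, hw0]
    simp only [hwn]
    ring
  have hnw : ‖w‖ = ‖z‖ := by
    have h1 : ‖w‖ ^ 2 = ‖z‖ ^ 2 := by
      rw [← real_inner_self_eq_norm_sq, ← real_inner_self_eq_norm_sq, hww]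
    rw [← Real.sqrt_sq (norm_nonneg w), ← Real.sqrt_sq (norm_nonneg z), h1]
  have hz0' : ‖z‖ ≠ 0 := norm_ne_zero_iff.mpr hz0
  -- strict Cauchy-Schwarz
  have hS : ⟪w, z⟫ < ‖z‖ ^ 2 := by
    rcases lt_or_eq_of_le (real_inner_le_norm w z) with h | h
    · rw [hnw] at h; nlinarith
    · exfalso
      have heq : ‖z‖ • w = ‖w‖ • z := inner_eq_norm_mul_iff_real.mp h
      rw [hnw] at heq
      have hwz : w = z := smul_right_injective _ hz0' heq
      have : ∀ n, z n = 0 := by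
        intro n
        induction n with
        | zero => rw [← hwz]; exact hw0
        | succ m ih => rw [← hwz, hwn m]; exact ih
      exact hz0 (by ext n; simp [this n])
  set S := ⟪w, z⟫ with hSdef
  set δ := ‖z‖ ^ 2 - S with hδdef
  have hδ : 0 < δ := by simp [hδdef]; linarith
  set c := (z 0 - 1) / δ with hcdef
  refine ⟨c • z, ?_⟩
  have hTx : T (c • z) = T 0 + c • w := by
    ext n
    rw [lp.coeFn_add, Pi.add_apply, lp.coeFn_smul, Pi.smul_apply]
    cases n with
    | zero => rw [(hT (c • z)).1, (hT 0).1, hw0]; simp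
    | succ m =>
        rw [(hT (c • z)).2 m, (hT 0).2 m, hwn m, lp.coeFn_smul, Pi.smul_apply]
        simp
  rw [hTx]
  have : ⟪c • z - (T 0 + c • w), z⟫ = c * ⟪z, z⟫ - ⟪T 0, z⟫ - c * S := by
    rw [inner_sub_left, inner_add_left, real_inner_smul_left, real_inner_smul_left]
    ring
  rw [this, hT0z, real_inner_self_eq_norm_sq]
  have : c * ‖z‖ ^ 2 - z 0 - c * S = c * δ - z 0 := by rw [hδdef]; ring
  rw [this, hcdef, div_mul_cancel₀ _ (ne_of_gt hδ)]
  linarith
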